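/- Let G be a finite group of order n, let k be a positive integer, and let A be a subset of G with k·|A| ≥ n. Then there exists a subset X of G with |X| ≤ k such that G = X·(AA⁻¹); in particular, (AA⁻¹)² ⊆ X·(AA⁻¹), and G is covered by at most k left-translates of AA⁻¹. -/
import Mathlib


open Pointwise

theorem stmt_7 {G : Type*} [Group G] [Fintype G] (k : ℕ) (hk : 0 < k)
    (A : Set G) (hA : Fintype.card G ≤ k * A.ncard) :
    ∃ X : Finset G, X.card ≤ k ∧
      (Set.univ : Set G) = (X : Set G) * (A * A⁻¹) ∧
      (A * A⁻¹) * (A * A⁻¹) ⊆ (X : Set G) * (A * A⁻¹) ∧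
      ∃ T : Finset G, T.card ≤ k ∧ (Set.univ : Set G) ⊆ ⋃ g ∈ T, g • (A * A⁻¹) := by
  classical
  have hAne : A.Nonempty := by
    rw [Set.nonempty_iff_ne_empty]
    rintro rfl
    simp only [Set.ncard_empty, mul_zero, Nat.le_zero] at hA
    exact (Fintype.card_pos).ne' hA
  have hApos : 0 < A.ncard := Set.Nonempty.ncard_pos A.toFinite hAne
  set P : Finset G → Prop := fun X => (X : Set G).PairwiseDisjoint (fun x => x • A) with hP
  have hPemp : P ∅ := by simp [hP]
  obtain ⟨X, hXmem, hXmax⟩ := Finset.exists_max_image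
    (Finset.univ.filter P) Finset.card ⟨∅, by simp [hPemp]⟩
  have hXP : P X := (Finset.mem_filter.mp hXmem).2
  -- cardinality bound
  set B : Finset G := A.toFinset with hB
  have hBcard : B.card = A.ncard := by
    simp [hB, Set.ncard_eq_toFinset_card']
  have hdisj : ∀ x ∈ X, ∀ y ∈ X, x ≠ y → Disjoint (x • B) (y • B) := by
    intro x hx y hy hxy
    rw [← Finset.disjoint_coe]
    simpa [hB] using hXP hx hy hxy
  have hcard : X.card * A.ncard ≤ Fintype.card G := by
    calc X.card * A.ncard = ∑ x ∈ X, (x • B).card := by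
          simp [Finset.card_smul_finset, hBcard, mul_comm]
      _ = (X.biUnion (fun x => x • B)).card := (Finset.card_biUnion hdisj).symm
      _ ≤ Fintype.card G := Finset.card_le_univ _
  have hXk : X.card ≤ k := by
    by_contra h
    push_neg at h
    have : k * A.ncard < X.card * A.ncard := (Nat.mul_lt_mul_right hApos).mpr h
    omega
  -- coverage
  have hone : (1 : G) ∈ A * A⁻¹ := by
    obtain ⟨a, ha⟩ := hAne
    exact ⟨a, ha, a⁻¹, Set.inv_mem_inv.mpr ha, mul_inv_cancel a⟩
  have hcover : ∀ g : G, ∃ x ∈ X, g ∈ x • (A * A⁻¹) := by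
    intro g
    by_contra h
    push_neg at h
    have hgX : g ∉ X := fun hg => h g hg ⟨1, hone, mul_one g⟩
    have hgdisj : ∀ x ∈ (X : Set G), Disjoint (g • A) (x • A) := by
      intro x hx
      rw [Set.disjoint_left]
      rintro z ⟨a, ha, rfl⟩ ⟨b, hb, hz⟩
      refine h x hx ⟨b * a⁻¹, Set.mul_mem_mul hb (Set.inv_mem_inv.mpr ha), ?_⟩
      have hz' : x * b = g * a := by simpa using hz
      show x • (b * a⁻¹) = g
      simp only [smul_eq_mul]
      rw [← mul_assoc, hz', mul_assoc, mul_inv_cancel, mul_one]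
    have hP' : P (insert g X) := by
      show ((insert g X : Finset G) : Set G).PairwiseDisjoint (fun x => x • A)
      rw [Finset.coe_insert]
      exact hXP.insert (fun x hx _ => hgdisj x hx)
    have hle := hXmax (insert g X) (Finset.mem_filter.mpr ⟨Finset.mem_univ _, hP'⟩)
    rw [Finset.card_insert_of_notMem hgX] at hle
    omega
  have huniv : (Set.univ : Set G) = (X : Set G) * (A * A⁻¹) := by
    apply Set.eq_of_subset_of_subset _ (Set.subset_univ _)
    intro g _
    obtain ⟨x, hx, c, hc, hxc⟩ := hcover g
    exact ⟨x, hx, c, hc, hxc⟩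
  refine ⟨X, hXk, huniv, huniv ▸ Set.subset_univ _, X, hXk, ?_⟩
  rw [← Finset.set_biUnion_coe, Set.iUnion_smul_set, smul_eq_mul, ← huniv]
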